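/- Let Z₁, Z₂ be independent standard normal random variables, let ρ ∈ [0, 1), and set X = Z₁ and Y = ρ·Z₁ + √(1−ρ²)·Z₂ (so (X, Y) is bivariate normal with zero means, unit variances and correlation ρ). Then for all a, b ∈ ℝ: P(X > a, Y > b) = P(X > a)·P(Y > b) + (1/(2π)) · ∫₀^{arcsin ρ} exp( −(a² + b² − 2ab·sin θ) / (2·cos²θ) ) dθ. -/

import Mathlib

open MeasureTheory ProbabilityTheory Real

open Set Filter
open scoped ENNReal NNReal Topology

noncomputable section

namespace BVN



/-- standard normal pdf -/
def phi (x : ℝ) : ℝ := gaussianPDFReal 0 1 x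

/-- standard normal upper tail -/
def T (t : ℝ) : ℝ := ((gaussianReal 0 1) (Set.Ioi t)).toReal

lemma phi_eq (x : ℝ) : phi x = (Real.sqrt (2 * π))⁻¹ * Real.exp (-x ^ 2 / 2) := by
  simp [phi, gaussianPDFReal]

lemma phi_nonneg (x : ℝ) : 0 ≤ phi x := gaussianPDFReal_nonneg 0 1 x

lemma continuous_phi : Continuous phi := by
  unfold phi gaussianPDFReal
  fun_prop

lemma integrable_phi : Integrable phi := integrable_gaussianPDFReal 0 1

lemma T_eq (t : ℝ) : T t = ∫ x in Set.Ioi t, phi x := by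
  rw [T, gaussianReal_apply_eq_integral 0 one_ne_zero,
    ENNReal.toReal_ofReal (setIntegral_nonneg measurableSet_Ioi fun x _ =>
      gaussianPDFReal_nonneg 0 1 x)]
  rfl

lemma T_nonneg (t : ℝ) : 0 ≤ T t := ENNReal.toReal_nonneg

lemma antitone_T : Antitone T := fun u v huv =>
  ENNReal.toReal_mono (measure_ne_top _ _) (measure_mono (Set.Ioi_subset_Ioi huv))

lemma measurable_T : Measurable T := antitone_T.measurable

lemma T_le_one (t : ℝ) : T t ≤ 1 := by
  have h : (gaussianReal 0 1) (Set.Ioi t) ≤ 1 := prob_le_one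
  simpa [T] using ENNReal.toReal_mono ENNReal.one_ne_top h



lemma integral_Ioc_phi {x y : ℝ} (h : x ≤ y) : ∫ u in Set.Ioc x y, phi u = T x - T y := by
  have hsplit : Set.Ioc x y ∪ Set.Ioi y = Set.Ioi x := Set.Ioc_union_Ioi_eq_Ioi h
  have hdisj : Disjoint (Set.Ioc x y) (Set.Ioi y) := by
    rw [Set.disjoint_left]
    rintro u ⟨_, h2⟩ h3
    exact absurd h3 (not_lt.2 h2)
  have := setIntegral_union hdisj measurableSet_Ioi integrable_phi.integrableOn
    integrable_phi.integrableOn (f := phi)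
  rw [hsplit] at this
  rw [T_eq, T_eq, this]
  ring

lemma intervalIntegral_phi (x y : ℝ) : ∫ u in x..y, phi u = T x - T y := by
  rcases le_total x y with h | h
  · rw [intervalIntegral.integral_of_le h, integral_Ioc_phi h]
  · rw [intervalIntegral.integral_symm, intervalIntegral.integral_of_le h, integral_Ioc_phi h]
    ring

lemma hasDerivAt_T (t : ℝ) : HasDerivAt T (-phi t) t := by
  have hT : T = fun y => T 0 - ∫ u in (0:ℝ)..y, phi u := by
    funext y
    rw [intervalIntegral_phi]
    ring
  rw [hT]
  have h := intervalIntegral.integral_hasDerivAt_right (a := (0:ℝ)) (b := t)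
    integrable_phi.intervalIntegrable
    (continuous_phi.stronglyMeasurable.stronglyMeasurableAtFilter)
    continuous_phi.continuousAt
  simpa using h.const_sub (T 0)



lemma var_ne_zero {c : ℝ} (hc : 0 < c) : (⟨c^2, sq_nonneg c⟩ : ℝ≥0) ≠ 0 := by
  intro h
  have h : c^2 = 0 := congrArg Subtype.val h
  nlinarith

lemma pdf_affine {c : ℝ} (hc : 0 < c) (m y : ℝ) :
    gaussianPDFReal m ⟨c^2, sq_nonneg c⟩ y = c⁻¹ * phi ((y - m)/c) := by
  rw [phi_eq]
  unfold gaussianPDFReal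
  show (Real.sqrt (2 * π * c^2))⁻¹ * Real.exp (-(y - m)^2 / (2 * c^2)) = _
  have h1 : Real.sqrt (2 * π * c^2) = c * Real.sqrt (2 * π) := by
    rw [show 2 * π * c^2 = (2*π) * c^2 by ring, Real.sqrt_mul (by positivity), Real.sqrt_sq hc.le]
    ring
  rw [h1]
  have hc2 : (c:ℝ)^2 ≠ 0 := by positivity
  have h2 : -(y - m)^2 / (2 * c^2) = -((y - m)/c)^2 / 2 := by
    field_simp
  rw [h2, mul_inv]
  ring

lemma pdf_symm {s c : ℝ} (hc : 0 < c) (hsc : s^2 + c^2 = 1) (x y : ℝ) :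
    phi x * gaussianPDFReal (s*x) ⟨c^2, sq_nonneg c⟩ y
      = phi y * gaussianPDFReal (s*y) ⟨c^2, sq_nonneg c⟩ x := by
  rw [pdf_affine hc, pdf_affine hc, phi_eq, phi_eq, phi_eq, phi_eq]
  have key : Real.exp (-x ^ 2 / 2) * Real.exp (-((y - s*x)/c) ^ 2 / 2)
      = Real.exp (-y ^ 2 / 2) * Real.exp (-((x - s*y)/c) ^ 2 / 2) := by
    rw [← Real.exp_add, ← Real.exp_add]
    congr 1
    have hc2 : (c:ℝ)^2 ≠ 0 := by positivity
    field_simp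
    ring_nf
    linear_combination (y^2 - x^2) * hsc
  calc (Real.sqrt (2 * π))⁻¹ * Real.exp (-x ^ 2 / 2) *
        (c⁻¹ * ((Real.sqrt (2 * π))⁻¹ * Real.exp (-((y - s*x)/c) ^ 2 / 2)))
      = (Real.sqrt (2 * π))⁻¹ * c⁻¹ * (Real.sqrt (2 * π))⁻¹ *
        (Real.exp (-x ^ 2 / 2) * Real.exp (-((y - s*x)/c) ^ 2 / 2)) := by ring
    _ = (Real.sqrt (2 * π))⁻¹ * c⁻¹ * (Real.sqrt (2 * π))⁻¹ *
        (Real.exp (-y ^ 2 / 2) * Real.exp (-((x - s*y)/c) ^ 2 / 2)) := by rw [key]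
    _ = _ := by ring

lemma tail_shift {c : ℝ} (hc : 0 < c) (s x b : ℝ) :
    T ((b - s*x)/c) = ∫ y in Set.Ioi b, gaussianPDFReal (s*x) ⟨c^2, sq_nonneg c⟩ y := by
  have hv := var_ne_zero hc
  have hmap : (gaussianReal 0 1).map (fun u => c*u + s*x)
      = gaussianReal (s*x) ⟨c^2, sq_nonneg c⟩ := by
    have h1 : (gaussianReal 0 1).map (fun u => c * u) = gaussianReal 0 ⟨c^2, sq_nonneg c⟩ := by
      have := gaussianReal_map_const_mul (μ := 0) (v := 1) c
      simp at this; exact this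
    have hcomp : (fun u => c*u + s*x) = (fun u => u + s*x) ∘ (fun u => c * u) := rfl
    rw [hcomp, ← Measure.map_map (measurable_add_const (s*x)) (measurable_const_mul c), h1]
    have := gaussianReal_map_add_const (μ := 0) (v := ⟨c^2, sq_nonneg c⟩) (s*x)
    simpa using this
  have hpre : (fun u => c*u + s*x) ⁻¹' (Set.Ioi b) = Set.Ioi ((b - s*x)/c) := by
    ext u
    simp only [Set.mem_preimage, Set.mem_Ioi]
    rw [div_lt_iff₀ hc]
    constructor <;> intro h <;> nlinarith
  have : gaussianReal (s*x) ⟨c^2, sq_nonneg c⟩ (Set.Ioi b)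
      = gaussianReal 0 1 (Set.Ioi ((b - s*x)/c)) := by
    rw [← hmap, Measure.map_apply (by fun_prop) measurableSet_Ioi, hpre]
  rw [T, ← this, gaussianReal_apply_eq_integral _ hv]
  exact (ENNReal.toReal_ofReal (setIntegral_nonneg measurableSet_Ioi fun y _ =>
      gaussianPDFReal_nonneg _ _ y))

lemma integral_pdf_one {c : ℝ} (hc : 0 < c) (m : ℝ) :
    ∫ x, gaussianPDFReal m ⟨c^2, sq_nonneg c⟩ x = 1 :=
  integral_gaussianPDFReal_eq_one m (var_ne_zero hc)

lemma marg_integral {s c : ℝ} (hc : 0 < c) (hsc : s^2 + c^2 = 1) (b : ℝ) :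
    ∫ x, phi x * T ((b - s*x)/c) = T b := by
  have hcontpdf : Continuous (fun z : ℝ × ℝ =>
      phi z.1 * gaussianPDFReal (s*z.1) ⟨c^2, sq_nonneg c⟩ z.2) := by
    unfold phi gaussianPDFReal
    fun_prop
  have haesm : AEStronglyMeasurable (fun z : ℝ × ℝ =>
      phi z.1 * gaussianPDFReal (s*z.1) ⟨c^2, sq_nonneg c⟩ z.2)
      (volume.prod (volume.restrict (Set.Ioi b))) := hcontpdf.aestronglyMeasurable
  have hint1 : ∀ x : ℝ, Integrable (fun y => phi x * gaussianPDFReal (s*x) ⟨c^2, sq_nonneg c⟩ y)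
      (volume.restrict (Set.Ioi b)) :=
    fun x => ((integrable_gaussianPDFReal _ _).restrict.const_mul _)
  have hInt : Integrable (Function.uncurry (fun x y =>
      phi x * gaussianPDFReal (s*x) ⟨c^2, sq_nonneg c⟩ y))
      (volume.prod (volume.restrict (Set.Ioi b))) := by
    refine (integrable_prod_iff (by exact haesm)).2 ⟨Filter.Eventually.of_forall hint1, ?_⟩
    have hb : ∀ x : ℝ, (∫ y in Set.Ioi b, ‖phi x * gaussianPDFReal (s*x) ⟨c^2, sq_nonneg c⟩ y‖)
        ≤ phi x := by
      intro x
      have h1 : ∀ y : ℝ, ‖phi x * gaussianPDFReal (s*x) ⟨c^2, sq_nonneg c⟩ y‖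
          = phi x * gaussianPDFReal (s*x) ⟨c^2, sq_nonneg c⟩ y := fun y =>
        abs_of_nonneg (mul_nonneg (phi_nonneg x) (gaussianPDFReal_nonneg _ _ y))
      simp_rw [h1]
      calc ∫ y in Set.Ioi b, phi x * gaussianPDFReal (s*x) ⟨c^2, sq_nonneg c⟩ y
          = phi x * ∫ y in Set.Ioi b, gaussianPDFReal (s*x) ⟨c^2, sq_nonneg c⟩ y := by
            rw [integral_const_mul]
        _ ≤ phi x * 1 := by
            refine mul_le_mul_of_nonneg_left ?_ (phi_nonneg x)
            rw [← integral_pdf_one hc (s*x)]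
            exact setIntegral_le_integral (integrable_gaussianPDFReal _ _)
              (Filter.Eventually.of_forall fun y => gaussianPDFReal_nonneg _ _ y)
        _ = phi x := mul_one _
    refine Integrable.mono' integrable_phi (by exact haesm.norm.integral_prod_right') ?_
    refine Filter.Eventually.of_forall fun x => ?_
    rw [Real.norm_eq_abs, abs_of_nonneg (integral_nonneg fun y => norm_nonneg _)]
    exact hb x
  calc ∫ x, phi x * T ((b - s*x)/c)
      = ∫ x, ∫ y in Set.Ioi b, phi x * gaussianPDFReal (s*x) ⟨c^2, sq_nonneg c⟩ y := by
        congr 1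
        funext x
        rw [tail_shift hc, integral_const_mul]
    _ = ∫ y in Set.Ioi b, ∫ x, phi x * gaussianPDFReal (s*x) ⟨c^2, sq_nonneg c⟩ y := by
        exact integral_integral_swap hInt
    _ = ∫ y in Set.Ioi b, phi y := by
        refine setIntegral_congr_fun measurableSet_Ioi fun y _ => ?_
        calc ∫ x, phi x * gaussianPDFReal (s*x) ⟨c^2, sq_nonneg c⟩ y
            = ∫ x, phi y * gaussianPDFReal (s*y) ⟨c^2, sq_nonneg c⟩ x := by
              congr 1
              funext x
              exact pdf_symm hc hsc x y
          _ = phi y * ∫ x, gaussianPDFReal (s*y) ⟨c^2, sq_nonneg c⟩ x := integral_const_mul _ _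
          _ = phi y := by rw [integral_pdf_one hc, mul_one]
    _ = T b := (T_eq b).symm



/-- the moving threshold -/
def u (b x θ : ℝ) : ℝ := (b - x * Real.sin θ) / Real.cos θ

/-- θ-derivative integrand -/
def D (b x θ : ℝ) : ℝ := phi (u b x θ) * (x - b * Real.sin θ) / Real.cos θ ^ 2

/-- joint density value -/
def Eg (b θ x : ℝ) : ℝ :=
  (2*π)⁻¹ * Real.exp (-(x^2 + b^2 - 2*b*x*Real.sin θ) / (2*Real.cos θ^2))

lemma hasDerivAt_u {θ : ℝ} (hθ : Real.cos θ ≠ 0) (b x : ℝ) :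
    HasDerivAt (u b x) ((b * Real.sin θ - x)/Real.cos θ^2) θ := by
  have h1 : HasDerivAt (fun θ => b - x * Real.sin θ) (-(x * Real.cos θ)) θ := by
    simpa using ((Real.hasDerivAt_sin θ).const_mul x).const_sub b
  have h2 := h1.div (Real.hasDerivAt_cos θ) hθ
  refine h2.congr_deriv ?_
  have hpy := Real.sin_sq_add_cos_sq θ
  linear_combination (-x / Real.cos θ ^ 2) * hpy

lemma hasDerivAt_Tu {θ : ℝ} (hθ : Real.cos θ ≠ 0) (b x : ℝ) :
    HasDerivAt (fun θ => T (u b x θ)) (D b x θ) θ := by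
  have h := (hasDerivAt_T (u b x θ)).comp θ (hasDerivAt_u hθ b x)
  refine h.congr_deriv ?_
  unfold D
  ring

lemma phi_mul_phi {θ : ℝ} (hθ : Real.cos θ ≠ 0) (b x : ℝ) :
    phi x * phi (u b x θ) = Eg b θ x := by
  rw [phi_eq, phi_eq, Eg, u]
  have h2π : (0:ℝ) < 2 * π := by positivity
  have hsqrt : (Real.sqrt (2 * π))⁻¹ * (Real.sqrt (2 * π))⁻¹ = (2*π)⁻¹ := by
    rw [← mul_inv, Real.mul_self_sqrt h2π.le]
  have hexp : Real.exp (-x ^ 2 / 2) * Real.exp (-((b - x * Real.sin θ) / Real.cos θ) ^ 2 / 2)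
      = Real.exp (-(x^2 + b^2 - 2*b*x*Real.sin θ) / (2*Real.cos θ^2)) := by
    rw [← Real.exp_add]
    congr 1
    have hpy := Real.sin_sq_add_cos_sq θ
    field_simp
    ring_nf
    linear_combination (-x^2) * hpy
  calc (Real.sqrt (2 * π))⁻¹ * Real.exp (-x ^ 2 / 2) *
        ((Real.sqrt (2 * π))⁻¹ * Real.exp (-((b - x * Real.sin θ) / Real.cos θ) ^ 2 / 2))
      = ((Real.sqrt (2 * π))⁻¹ * (Real.sqrt (2 * π))⁻¹) *
        (Real.exp (-x ^ 2 / 2) * Real.exp (-((b - x * Real.sin θ) / Real.cos θ) ^ 2 / 2)) := by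
        ring
    _ = (2*π)⁻¹ * Real.exp (-(x^2 + b^2 - 2*b*x*Real.sin θ) / (2*Real.cos θ^2)) := by
        rw [hsqrt, hexp]

lemma hasDerivAt_Eg {θ : ℝ} (hθ : Real.cos θ ≠ 0) (b x : ℝ) :
    HasDerivAt (fun x => -(Eg b θ x)) (phi x * D b x θ) x := by
  have hq : HasDerivAt (fun x : ℝ => -(x^2 + b^2 - 2*b*x*Real.sin θ) / (2*Real.cos θ^2))
      ((b * Real.sin θ - x) / Real.cos θ^2) x := by
    have hbase : HasDerivAt (fun x : ℝ => x^2 + b^2 - 2*b*x*Real.sin θ)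
        (2*x - 2*b*Real.sin θ) x := by
      have h := ((hasDerivAt_pow 2 x).add_const (b^2)).sub
        ((hasDerivAt_id x).const_mul (2*b*Real.sin θ))
      have e : (fun x : ℝ => x^2 + b^2 - 2*b*x*Real.sin θ)
          = (fun x => x^2 + b^2) - fun y => 2*b*Real.sin θ * id y := by
        funext y; simp only [Pi.sub_apply, id_eq]; ring
      rw [e]
      refine h.congr_deriv ?_
      norm_num
    have := (hbase.neg).div_const (2*Real.cos θ^2)
    refine this.congr_deriv ?_
    ring
  have hexp := (hq.exp).const_mul ((2:ℝ)*π)⁻¹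
  have hneg := hexp.neg
  refine hneg.congr_deriv ?_
  symm
  have hE := phi_mul_phi hθ b x
  simp only [Eg] at hE
  unfold D
  calc phi x * (phi (u b x θ) * (x - b*Real.sin θ) / Real.cos θ^2)
      = (phi x * phi (u b x θ)) * ((x - b*Real.sin θ) / Real.cos θ^2) := by ring
    _ = ((2*π)⁻¹ * Real.exp (-(x^2 + b^2 - 2*b*x*Real.sin θ) / (2*Real.cos θ^2)))
          * ((x - b*Real.sin θ) / Real.cos θ^2) := by rw [hE]
    _ = -((2*π)⁻¹ * (Real.exp (-(x^2 + b^2 - 2*b*x*Real.sin θ) / (2*Real.cos θ^2))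
          * ((b*Real.sin θ - x) / Real.cos θ^2))) := by ring

lemma tendsto_Eg {θ : ℝ} (hθ : Real.cos θ ≠ 0) (b : ℝ) :
    Tendsto (fun x => -(Eg b θ x)) atTop (𝓝 0) := by
  have hc2 : (0:ℝ) < Real.cos θ^2 := by positivity
  have hexp : Tendsto (fun x : ℝ => -(x^2 + b^2 - 2*b*x*Real.sin θ) / (2*Real.cos θ^2))
      atTop atBot := by
    have h1 : Tendsto (fun x : ℝ => x^2 + b^2 - 2*b*x*Real.sin θ) atTop atTop := by
      have heq : (fun x : ℝ => x^2 + b^2 - 2*b*x*Real.sin θ)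
          = fun x : ℝ => (x - b*Real.sin θ) * (x - b*Real.sin θ) + (b^2 - (b*Real.sin θ)^2) := by
        funext x; ring
      rw [heq]
      have h2 : Tendsto (fun x : ℝ => x - b*Real.sin θ) atTop atTop :=
        tendsto_atTop_add_const_right _ _ tendsto_id
      exact tendsto_atTop_add_const_right _ _ (h2.atTop_mul_atTop₀ h2)
    have h3 : Tendsto (fun x : ℝ => -(x^2 + b^2 - 2*b*x*Real.sin θ)) atTop atBot :=
      tendsto_neg_atBot_iff.2 h1
    exact h3.atBot_div_const (by positivity)
  have h4 : Tendsto (fun x => Real.exp (-(x^2 + b^2 - 2*b*x*Real.sin θ) / (2*Real.cos θ^2)))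
      atTop (𝓝 0) := Real.tendsto_exp_atBot.comp hexp
  have h5 := (h4.const_mul ((2*π)⁻¹)).neg
  simpa [Eg] using h5



lemma integrable_bound {k : ℝ} (hk : 0 < k) (B : ℝ) :
    Integrable (fun x : ℝ => (|x| + B) * Real.exp (-k * x^2)) := by
  have h1 : Integrable (fun x : ℝ => |x| * Real.exp (-k*x^2)) := by
    have h := (integrable_mul_exp_neg_mul_sq hk).abs
    convert h using 2 with x
    rw [abs_mul, abs_of_pos (Real.exp_pos _)]
  have h2 := (integrable_exp_neg_mul_sq hk).const_mul B
  have h3 := h1.add h2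
  convert h3 using 1
  · rfl
  funext x
  simp only [Pi.add_apply]
  ring

lemma Eg_nonneg (b θ x : ℝ) : 0 ≤ Eg b θ x := by
  unfold Eg
  positivity

lemma D_bound {θ ρ c₀ : ℝ} (hs0 : 0 ≤ Real.sin θ) (hsρ : Real.sin θ ≤ ρ) (hρ1 : ρ < 1)
    (hc₀ : 0 < c₀) (hcθ : c₀ ≤ Real.cos θ) (b x : ℝ) :
    ‖phi x * D b x θ‖ ≤ (2*π)⁻¹/c₀^2 * ((|x| + |b|) * Real.exp (-((1-ρ)/2) * x^2)) := by
  have hcθ0 : (0:ℝ) < Real.cos θ := lt_of_lt_of_le hc₀ hcθ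
  have h1 : phi x * D b x θ = Eg b θ x * (x - b*Real.sin θ) / Real.cos θ^2 := by
    unfold D
    rw [← phi_mul_phi hcθ0.ne' b x]
    ring
  rw [h1, Real.norm_eq_abs, abs_div, abs_mul, abs_of_nonneg (Eg_nonneg b θ x),
    abs_of_pos (by positivity : (0:ℝ) < Real.cos θ^2)]
  have hEgle : Eg b θ x ≤ (2*π)⁻¹ * Real.exp (-((1-ρ)/2) * x^2) := by
    unfold Eg
    refine mul_le_mul_of_nonneg_left ?_ (by positivity)
    refine Real.exp_le_exp.2 ?_
    have key : ((1-ρ)/2)*x^2 ≤ (x^2 + b^2 - 2*b*x*Real.sin θ)/(2*Real.cos θ^2) := by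
      rw [le_div_iff₀ (by positivity)]
      nlinarith [mul_nonneg hs0 (sq_nonneg (x - b)),
        mul_nonneg (sub_nonneg.2 (hsρ.trans hρ1.le)) (sq_nonneg b),
        mul_nonneg (sub_nonneg.2 hsρ) (sq_nonneg x),
        mul_nonneg (mul_nonneg (sub_nonneg.2 hρ1.le)
          (sub_nonneg.2 (Real.cos_sq_le_one θ))) (sq_nonneg x)]
    calc -(x^2 + b^2 - 2*b*x*Real.sin θ)/(2*Real.cos θ^2)
        = -((x^2 + b^2 - 2*b*x*Real.sin θ)/(2*Real.cos θ^2)) := by rw [neg_div]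
      _ ≤ -(((1-ρ)/2)*x^2) := neg_le_neg key
      _ = -((1-ρ)/2)*x^2 := by ring
  have habs : |x - b*Real.sin θ| ≤ |x| + |b| := by
    calc |x - b*Real.sin θ| = |x + -(b*Real.sin θ)| := by rw [sub_eq_add_neg]
      _ ≤ |x| + |-(b*Real.sin θ)| := abs_add_le _ _
      _ = |x| + |b| * |Real.sin θ| := by rw [abs_neg, abs_mul]
      _ ≤ |x| + |b| * 1 := by
          exact add_le_add le_rfl (mul_le_mul_of_nonneg_left (Real.abs_sin_le_one θ)
            (abs_nonneg b))
      _ = |x| + |b| := by ring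
  calc Eg b θ x * |x - b*Real.sin θ| / Real.cos θ^2
      ≤ ((2*π)⁻¹ * Real.exp (-((1-ρ)/2) * x^2)) * (|x| + |b|) / c₀^2 := by
        refine div_le_div₀ (by positivity) ?_ (by positivity)
          (pow_le_pow_left₀ hc₀.le hcθ 2)
        exact mul_le_mul hEgle habs (abs_nonneg _) (by positivity)
    _ = (2*π)⁻¹/c₀^2 * ((|x| + |b|) * Real.exp (-((1-ρ)/2) * x^2)) := by ring

lemma continuous_phiD_x {θ : ℝ} (hθ : Real.cos θ ≠ 0) (b : ℝ) :
    Continuous (fun x => phi x * D b x θ) := by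
  unfold D u phi gaussianPDFReal
  fun_prop

lemma integrable_phiD {θ ρ : ℝ} (hθc : 0 < Real.cos θ) (hs0 : 0 ≤ Real.sin θ)
    (hsρ : Real.sin θ ≤ ρ) (hρ1 : ρ < 1) (b : ℝ) :
    Integrable (fun x => phi x * D b x θ) := by
  have hk : (0:ℝ) < (1-ρ)/2 := by linarith
  refine Integrable.mono' (((integrable_bound hk |b|).const_mul ((2*π)⁻¹/Real.cos θ^2)))
    (continuous_phiD_x hθc.ne' b).aestronglyMeasurable ?_
  exact Filter.Eventually.of_forall fun x =>
    D_bound hs0 hsρ hρ1 hθc le_rfl b x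

lemma x_integral {θ ρ : ℝ} (hθc : 0 < Real.cos θ) (hs0 : 0 ≤ Real.sin θ)
    (hsρ : Real.sin θ ≤ ρ) (hρ1 : ρ < 1) (a b : ℝ) :
    ∫ x in Set.Ioi a, phi x * D b x θ = Eg b θ a := by
  have hcont : Continuous (fun x => -(Eg b θ x)) := by
    unfold Eg
    fun_prop
  have h := integral_Ioi_of_hasDerivAt_of_tendsto (f := fun x => -(Eg b θ x))
    (f' := fun x => phi x * D b x θ) (a := a) (m := 0)
    hcont.continuousWithinAt
    (fun x _ => hasDerivAt_Eg hθc.ne' b x)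
    (integrable_phiD hθc hs0 hsρ hρ1 b).integrableOn
    (tendsto_Eg hθc.ne' b)
  rw [h]
  ring



lemma continuousOn_D_theta (b x : ℝ) {S : Set ℝ} (h : ∀ θ ∈ S, Real.cos θ ≠ 0) :
    ContinuousOn (fun θ => D b x θ) S := by
  unfold D u
  refine (ContinuousOn.div (ContinuousOn.mul ?_ (by fun_prop))
    (by fun_prop) fun θ hθ => pow_ne_zero 2 (h θ hθ))
  exact continuous_phi.comp_continuousOn
    (ContinuousOn.div (by fun_prop) (by fun_prop) h)

lemma continuousOn_phiD_theta (b x : ℝ) {S : Set ℝ} (h : ∀ θ ∈ S, Real.cos θ ≠ 0) :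
    ContinuousOn (fun θ => phi x * D b x θ) S := by
  unfold D u
  refine continuousOn_const.mul (ContinuousOn.div (ContinuousOn.mul ?_ (by fun_prop))
    (by fun_prop) fun θ hθ => pow_ne_zero 2 (h θ hθ))
  exact continuous_phi.comp_continuousOn
    (ContinuousOn.div (by fun_prop) (by fun_prop) h)

lemma continuousOn_phiD_prod (b : ℝ) {S : Set (ℝ × ℝ)} (h : ∀ z ∈ S, Real.cos z.2 ≠ 0) :
    ContinuousOn (fun z : ℝ × ℝ => phi z.1 * D b z.1 z.2) S := by
  unfold D u
  refine ContinuousOn.mul (continuous_phi.comp continuous_fst).continuousOn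
    (ContinuousOn.div (ContinuousOn.mul ?_ (by fun_prop)) (by fun_prop)
      fun z hz => pow_ne_zero 2 (h z hz))
  exact continuous_phi.comp_continuousOn
    (ContinuousOn.div (by fun_prop) (by fun_prop) h)

/-- FTC in θ for fixed x -/
lemma theta_ftc {θ₀ : ℝ} (hθ₀0 : 0 ≤ θ₀) (hθ₀ : θ₀ < π/2) (b x : ℝ) :
    T (u b x θ₀) - T b = ∫ θ in Set.Ioc 0 θ₀, D b x θ := by
  have hcos : ∀ θ ∈ Set.uIcc (0:ℝ) θ₀, Real.cos θ ≠ 0 := by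
    intro θ hθ
    rw [Set.uIcc_of_le hθ₀0] at hθ
    have h1 : -(π/2) < θ := by linarith [hθ.1, pi_div_two_pos]
    have h2 : θ < π/2 := lt_of_le_of_lt hθ.2 hθ₀
    exact (Real.cos_pos_of_mem_Ioo ⟨h1, h2⟩).ne'
  have hderiv : ∀ θ ∈ Set.uIcc (0:ℝ) θ₀, HasDerivAt (fun θ => T (u b x θ)) (D b x θ) θ :=
    fun θ hθ => hasDerivAt_Tu (hcos θ hθ) b x
  have hint : IntervalIntegrable (D b x) volume 0 θ₀ :=
    (continuousOn_D_theta b x hcos).intervalIntegrable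
  have h := intervalIntegral.integral_eq_sub_of_hasDerivAt hderiv hint
  have hu0 : u b x 0 = b := by simp [u]
  rw [← intervalIntegral.integral_of_le hθ₀0, h, hu0]

lemma swap_integrals {θ₀ ρ : ℝ} (hθ₀0 : 0 ≤ θ₀) (hθ₀ : θ₀ < π/2) (hρ1 : ρ < 1)
    (hsin : Real.sin θ₀ ≤ ρ) (a b : ℝ) :
    ∫ x in Set.Ioi a, (∫ θ in Set.Ioc 0 θ₀, phi x * D b x θ)
      = ∫ θ in Set.Ioc 0 θ₀, ∫ x in Set.Ioi a, phi x * D b x θ := by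
  have hπ2 : 0 < π/2 := pi_div_two_pos
  have hπ : π/2 ≤ π := by linarith [pi_pos]
  have hc₀ : 0 < Real.cos θ₀ :=
    Real.cos_pos_of_mem_Ioo ⟨by linarith, hθ₀⟩
  have hk : (0:ℝ) < (1-ρ)/2 := by linarith
  have hfacts : ∀ θ ∈ Set.Icc (0:ℝ) θ₀,
      0 ≤ Real.sin θ ∧ Real.sin θ ≤ ρ ∧ Real.cos θ₀ ≤ Real.cos θ := by
    intro θ hθ
    obtain ⟨h0, h1⟩ := hθ
    have hθhalf : θ < π/2 := lt_of_le_of_lt h1 hθ₀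
    have hθπ : θ ≤ π := by linarith
    refine ⟨Real.sin_nonneg_of_nonneg_of_le_pi h0 hθπ, ?_, ?_⟩
    · calc Real.sin θ ≤ Real.sin θ₀ :=
            Real.strictMonoOn_sin.monotoneOn ⟨by linarith, by linarith⟩
              ⟨by linarith, by linarith⟩ h1
        _ ≤ ρ := hsin
    · exact Real.strictAntiOn_cos.antitoneOn ⟨h0, hθπ⟩ ⟨hθ₀0, by linarith⟩ h1
  have hcosS : ∀ z ∈ Set.Ioi a ×ˢ Set.Ioc 0 θ₀, Real.cos z.2 ≠ 0 := fun z hz =>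
    (lt_of_lt_of_le hc₀ (hfacts z.2 (Set.mem_Icc_of_Ioc hz.2)).2.2).ne'
  have haesm : AEStronglyMeasurable (fun z : ℝ × ℝ => phi z.1 * D b z.1 z.2)
      ((volume.restrict (Set.Ioi a)).prod (volume.restrict (Set.Ioc 0 θ₀))) := by
    rw [Measure.prod_restrict]
    exact (continuousOn_phiD_prod b hcosS).aestronglyMeasurable
      (measurableSet_Ioi.prod measurableSet_Ioc)
  have hint1 : ∀ x : ℝ, Integrable (fun θ => phi x * D b x θ)
      (volume.restrict (Set.Ioc 0 θ₀)) := by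
    intro x
    have hc : ContinuousOn (fun θ => phi x * D b x θ) (Set.Icc 0 θ₀) :=
      continuousOn_phiD_theta b x (fun θ hθ =>
        (lt_of_lt_of_le hc₀ (hfacts θ hθ).2.2).ne')
    exact (hc.integrableOn_Icc).mono_set Set.Ioc_subset_Icc_self
  have hbound : ∀ x : ℝ, (∫ θ in Set.Ioc 0 θ₀, ‖phi x * D b x θ‖)
      ≤ θ₀ * ((2*π)⁻¹/Real.cos θ₀^2 * ((|x| + |b|) * Real.exp (-((1-ρ)/2) * x^2))) := by
    intro x
    calc ∫ θ in Set.Ioc 0 θ₀, ‖phi x * D b x θ‖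
        ≤ ∫ _θ in Set.Ioc 0 θ₀,
            (2*π)⁻¹/Real.cos θ₀^2 * ((|x| + |b|) * Real.exp (-((1-ρ)/2) * x^2)) := by
          refine setIntegral_mono_on ((hint1 x).norm)
            (integrableOn_const ?_) measurableSet_Ioc ?_
          · rw [Real.volume_Ioc]; exact ENNReal.ofReal_ne_top
          · intro θ hθ
            have hf := hfacts θ (Set.mem_Icc_of_Ioc hθ)
            exact D_bound hf.1 hf.2.1 hρ1 hc₀ hf.2.2 b x
      _ = θ₀ * ((2*π)⁻¹/Real.cos θ₀^2 * ((|x| + |b|) * Real.exp (-((1-ρ)/2) * x^2))) := by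
          rw [setIntegral_const, Real.volume_real_Ioc_of_le hθ₀0, smul_eq_mul,
            sub_zero]
  have hInt : Integrable (Function.uncurry (fun x θ => phi x * D b x θ))
      ((volume.restrict (Set.Ioi a)).prod (volume.restrict (Set.Ioc 0 θ₀))) := by
    refine (integrable_prod_iff (by exact haesm)).2
      ⟨Filter.Eventually.of_forall hint1, ?_⟩
    refine Integrable.mono' ((((integrable_bound hk |b|).const_mul
      ((2*π)⁻¹/Real.cos θ₀^2)).const_mul θ₀).restrict)
      (by exact haesm.norm.integral_prod_right') ?_
    refine Filter.Eventually.of_forall fun x => ?_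
    rw [Real.norm_eq_abs, abs_of_nonneg (integral_nonneg fun θ => norm_nonneg _)]
    exact hbound x
  exact integral_integral_swap hInt



lemma gauss_setIntegral (f : ℝ → ℝ) {s : Set ℝ} (hs : MeasurableSet s) :
    ∫ x in s, f x ∂(gaussianReal 0 1) = ∫ x in s, phi x * f x := by
  rw [gaussianReal_of_var_ne_zero 0 one_ne_zero]
  have hd : (gaussianPDF 0 1) = fun x => ((Real.toNNReal (phi x) : ℝ≥0) : ℝ≥0∞) := rfl
  rw [hd, setIntegral_withDensity_eq_setIntegral_smul₀
    (continuous_phi.measurable.real_toNNReal.aemeasurable) f hs]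
  refine setIntegral_congr_fun hs fun x _ => ?_
  rw [NNReal.smul_def, smul_eq_mul, Real.coe_toNNReal _ (phi_nonneg x)]

lemma gauss_integral (f : ℝ → ℝ) : ∫ x, f x ∂(gaussianReal 0 1) = ∫ x, phi x * f x := by
  have h := gauss_setIntegral f MeasurableSet.univ
  simpa using h

lemma antitone_measure : Antitone (fun t : ℝ => (gaussianReal 0 1) (Set.Ioi t)) :=
  fun u v huv => measure_mono (Set.Ioi_subset_Ioi huv)

lemma main_repr {ρ c : ℝ} (hc : 0 < c) (a b : ℝ) :
    (((gaussianReal 0 1).prod (gaussianReal 0 1))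
      {z : ℝ × ℝ | a < z.1 ∧ b < ρ * z.1 + c * z.2}).toReal
      = ∫ x in Set.Ioi a, phi x * T ((b - ρ*x)/c) := by
  have hS : MeasurableSet {z : ℝ × ℝ | a < z.1 ∧ b < ρ * z.1 + c * z.2} := by
    have heq : {z : ℝ × ℝ | a < z.1 ∧ b < ρ * z.1 + c * z.2}
        = {z : ℝ × ℝ | a < z.1} ∩ {z : ℝ × ℝ | b < ρ * z.1 + c * z.2} := rfl
    rw [heq]
    exact (measurableSet_lt measurable_const measurable_fst).inter
      (measurableSet_lt measurable_const
        ((measurable_fst.const_mul ρ).add (measurable_snd.const_mul c)))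
  rw [Measure.prod_apply hS]
  have hlint : ∫⁻ x, (gaussianReal 0 1)
        (Prod.mk x ⁻¹' {z : ℝ × ℝ | a < z.1 ∧ b < ρ * z.1 + c * z.2}) ∂(gaussianReal 0 1)
      = ∫⁻ x in Set.Ioi a, (gaussianReal 0 1) (Set.Ioi ((b - ρ*x)/c)) ∂(gaussianReal 0 1) := by
    rw [← lintegral_indicator measurableSet_Ioi]
    refine lintegral_congr fun x => ?_
    by_cases hx : a < x
    · have hpre : (Prod.mk x ⁻¹' {z : ℝ × ℝ | a < z.1 ∧ b < ρ * z.1 + c * z.2})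
          = Set.Ioi ((b - ρ*x)/c) := by
        ext y
        simp only [Set.mem_preimage, Set.mem_setOf_eq, Set.mem_Ioi, hx, true_and]
        rw [div_lt_iff₀ hc]
        constructor <;> intro h <;> nlinarith
      rw [hpre, Set.indicator_of_mem (show x ∈ Set.Ioi a from hx)]
    · have hpre : (Prod.mk x ⁻¹' {z : ℝ × ℝ | a < z.1 ∧ b < ρ * z.1 + c * z.2}) = ∅ := by
        ext y
        simp [Set.mem_preimage, hx]
      rw [hpre, Set.indicator_of_notMem (show x ∉ Set.Ioi a from hx)]
      simp
  rw [hlint]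
  have hmeas : AEMeasurable (fun x => (gaussianReal 0 1) (Set.Ioi ((b - ρ*x)/c)))
      ((gaussianReal 0 1).restrict (Set.Ioi a)) :=
    (antitone_measure.measurable.comp
      (by fun_prop : Measurable fun x : ℝ => (b - ρ*x)/c)).aemeasurable
  rw [← integral_toReal hmeas (Filter.Eventually.of_forall fun x => measure_lt_top _ _)]
  exact gauss_setIntegral (fun x => T ((b - ρ*x)/c)) measurableSet_Ioi

lemma marg2 {s c : ℝ} (hc : 0 < c) (hsc : s^2 + c^2 = 1) (b : ℝ) :
    (((gaussianReal 0 1).prod (gaussianReal 0 1))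
      {z : ℝ × ℝ | b < s * z.1 + c * z.2}).toReal = T b := by
  have hS : MeasurableSet {z : ℝ × ℝ | b < s * z.1 + c * z.2} :=
    measurableSet_lt measurable_const
      ((measurable_fst.const_mul s).add (measurable_snd.const_mul c))
  rw [Measure.prod_apply hS]
  have hlint : ∫⁻ x, (gaussianReal 0 1)
        (Prod.mk x ⁻¹' {z : ℝ × ℝ | b < s * z.1 + c * z.2}) ∂(gaussianReal 0 1)
      = ∫⁻ x, (gaussianReal 0 1) (Set.Ioi ((b - s*x)/c)) ∂(gaussianReal 0 1) := by
    refine lintegral_congr fun x => ?_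
    have hpre : (Prod.mk x ⁻¹' {z : ℝ × ℝ | b < s * z.1 + c * z.2})
        = Set.Ioi ((b - s*x)/c) := by
      ext y
      simp only [Set.mem_preimage, Set.mem_setOf_eq, Set.mem_Ioi]
      rw [div_lt_iff₀ hc]
      constructor <;> intro h <;> nlinarith
    rw [hpre]
  rw [hlint]
  have hmeas : AEMeasurable (fun x => (gaussianReal 0 1) (Set.Ioi ((b - s*x)/c)))
      (gaussianReal 0 1) :=
    (antitone_measure.measurable.comp
      (by fun_prop : Measurable fun x : ℝ => (b - s*x)/c)).aemeasurable
  rw [← integral_toReal hmeas (Filter.Eventually.of_forall fun x => measure_lt_top _ _)]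
  have h := gauss_integral (fun x => T ((b - s*x)/c))
  exact h.trans (marg_integral hc hsc b)

lemma marg1 (a : ℝ) :
    (((gaussianReal 0 1).prod (gaussianReal 0 1)) {z : ℝ × ℝ | a < z.1}).toReal = T a := by
  have h : {z : ℝ × ℝ | a < z.1} = Set.Ioi a ×ˢ (Set.univ : Set ℝ) := by
    ext z
    simp
  rw [h, Measure.prod_prod, measure_univ, mul_one]
  rfl



lemma theta_facts {θ₀ ρ : ℝ} (hθ₀0 : 0 ≤ θ₀) (hθ₀ : θ₀ < π/2) (hsin : Real.sin θ₀ ≤ ρ) :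
    ∀ θ ∈ Set.Icc (0:ℝ) θ₀,
      0 ≤ Real.sin θ ∧ Real.sin θ ≤ ρ ∧ Real.cos θ₀ ≤ Real.cos θ := by
  have hπ2 : 0 < π/2 := pi_div_two_pos
  have hπ : π/2 ≤ π := by linarith [pi_pos]
  intro θ hθ
  obtain ⟨h0, h1⟩ := hθ
  have hθhalf : θ < π/2 := lt_of_le_of_lt h1 hθ₀
  have hθπ : θ ≤ π := by linarith
  refine ⟨Real.sin_nonneg_of_nonneg_of_le_pi h0 hθπ, ?_, ?_⟩
  · calc Real.sin θ ≤ Real.sin θ₀ :=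
          Real.strictMonoOn_sin.monotoneOn ⟨by linarith, by linarith⟩
            ⟨by linarith, by linarith⟩ h1
      _ ≤ ρ := hsin
  · exact Real.strictAntiOn_cos.antitoneOn ⟨h0, hθπ⟩ ⟨hθ₀0, by linarith⟩ h1

end BVN

open BVN

/-- **Tail probability for bivariate normals.**  Let (X, Y) = (Z₁, ρZ₁ + √(1−ρ²)Z₂) where
Z₁, Z₂ are independent standard normals and ρ ∈ [0, 1).  Then for all a, b ∈ ℝ,
`P(X > a, Y > b) = P(X > a) P(Y > b)
  + (1/2π) ∫₀^{arcsin ρ} exp(−(a² + b² − 2ab sin θ)/(2 cos²θ)) dθ`. -/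
theorem bivariate_normal_tail (ρ : ℝ) (hρ0 : 0 ≤ ρ) (hρ1 : ρ < 1) (a b : ℝ) :
    (((gaussianReal 0 1).prod (gaussianReal 0 1))
        {z : ℝ × ℝ | a < z.1 ∧ b < ρ * z.1 + Real.sqrt (1 - ρ ^ 2) * z.2}).toReal =
      (((gaussianReal 0 1).prod (gaussianReal 0 1)) {z : ℝ × ℝ | a < z.1}).toReal *
        (((gaussianReal 0 1).prod (gaussianReal 0 1))
          {z : ℝ × ℝ | b < ρ * z.1 + Real.sqrt (1 - ρ ^ 2) * z.2}).toReal +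
      (1 / (2 * π)) * ∫ θ in (0 : ℝ)..(Real.arcsin ρ),
        Real.exp (-(a ^ 2 + b ^ 2 - 2 * a * b * Real.sin θ) / (2 * Real.cos θ ^ 2)) := by
  set c := Real.sqrt (1 - ρ ^ 2) with hcdef
  have hρ2 : ρ^2 < 1 := by nlinarith
  have hc : 0 < c := Real.sqrt_pos.2 (by linarith)
  have hsc : ρ^2 + c^2 = 1 := by
    rw [hcdef, Real.sq_sqrt (by linarith : (0:ℝ) ≤ 1 - ρ^2)]
    ring
  set θ₀ := Real.arcsin ρ with hθdef
  have hθ₀0 : 0 ≤ θ₀ := Real.arcsin_nonneg.2 hρ0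
  have hθ₀lt : θ₀ < π/2 := Real.arcsin_lt_pi_div_two.2 hρ1
  have hsinθ₀ : Real.sin θ₀ = ρ := Real.sin_arcsin (by linarith) hρ1.le
  have hcosθ₀ : Real.cos θ₀ = c := by rw [hθdef, Real.cos_arcsin]
  have hcθ₀ : 0 < Real.cos θ₀ := by rw [hcosθ₀]; exact hc
  have hfacts := theta_facts hθ₀0 hθ₀lt (le_of_eq hsinθ₀)
  rw [main_repr hc a b, marg1 a, marg2 hc hsc b]
  have hux : ∀ x : ℝ, (b - ρ*x)/c = u b x θ₀ := by
    intro x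
    rw [u, hsinθ₀, hcosθ₀, mul_comm]
  have hTm : Measurable fun x => T (u b x θ₀) := by
    refine measurable_T.comp ?_
    unfold u
    fun_prop
  have hint1 : Integrable (fun x => phi x * T (u b x θ₀)) := by
    refine Integrable.mono' integrable_phi
      ((continuous_phi.aestronglyMeasurable).mul hTm.aestronglyMeasurable) ?_
    refine Filter.Eventually.of_forall fun x => ?_
    rw [Real.norm_eq_abs, abs_mul, abs_of_nonneg (phi_nonneg x),
      abs_of_nonneg (T_nonneg _)]
    calc phi x * T (u b x θ₀) ≤ phi x * 1 :=
          mul_le_mul_of_nonneg_left (T_le_one _) (phi_nonneg x)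
      _ = phi x := mul_one _
  have hint2 : Integrable (fun x => phi x * T b) := integrable_phi.mul_const _
  calc ∫ x in Set.Ioi a, phi x * T ((b - ρ*x)/c)
      = ∫ x in Set.Ioi a, (phi x * T b + phi x * (T (u b x θ₀) - T b)) := by
        refine setIntegral_congr_fun measurableSet_Ioi fun x _ => ?_
        rw [hux x]
        ring
    _ = (∫ x in Set.Ioi a, phi x * T b)
        + ∫ x in Set.Ioi a, phi x * (T (u b x θ₀) - T b) := by
        refine integral_add hint2.integrableOn ?_
        refine ((hint1.integrableOn).sub hint2.integrableOn).congr ?_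
        refine Filter.Eventually.of_forall fun x => ?_
        simp only [Pi.sub_apply]
        ring
    _ = T a * T b + ∫ x in Set.Ioi a, phi x * (T (u b x θ₀) - T b) := by
        congr 1
        rw [integral_mul_const, ← T_eq]
    _ = T a * T b + ∫ θ in Set.Ioc 0 θ₀, Eg b θ a := by
        congr 1
        calc ∫ x in Set.Ioi a, phi x * (T (u b x θ₀) - T b)
            = ∫ x in Set.Ioi a, ∫ θ in Set.Ioc 0 θ₀, phi x * D b x θ := by
              refine setIntegral_congr_fun measurableSet_Ioi fun x _ => ?_
              rw [theta_ftc hθ₀0 hθ₀lt b x, ← integral_const_mul]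
          _ = ∫ θ in Set.Ioc 0 θ₀, ∫ x in Set.Ioi a, phi x * D b x θ :=
              swap_integrals hθ₀0 hθ₀lt hρ1 (le_of_eq hsinθ₀) a b
          _ = ∫ θ in Set.Ioc 0 θ₀, Eg b θ a := by
              refine setIntegral_congr_fun measurableSet_Ioc fun θ hθ => ?_
              have hf := hfacts θ (Set.mem_Icc_of_Ioc hθ)
              exact x_integral (lt_of_lt_of_le hcθ₀ hf.2.2) hf.1 hf.2.1 hρ1 a b
    _ = T a * T b + (1 / (2 * π)) * ∫ θ in (0 : ℝ)..θ₀,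
        Real.exp (-(a ^ 2 + b ^ 2 - 2 * a * b * Real.sin θ) / (2 * Real.cos θ ^ 2)) := by
        congr 1
        rw [← intervalIntegral.integral_of_le hθ₀0, ← intervalIntegral.integral_const_mul]
        refine intervalIntegral.integral_congr fun θ _ => ?_
        simp only [Eg]
        rw [show a^2 + b^2 - 2*b*a*Real.sin θ = a^2 + b^2 - 2*a*b*Real.sin θ by ring,
          show (1:ℝ)/(2*π) = (2*π)⁻¹ by rw [one_div]]

end
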